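/- Let V be a vector space of even dimension over any field K, and let ω be an alternating trilinear form on V. Then every one-dimensional subspace of V is contained in a two-dimensional subspace U of V that is singular for ω, i.e. ω(u,u',v)=0 for all u,u' ∈ U and v ∈ V. -/

import Mathlib

open Matrix MvPolynomial Module

/-- An alternating matrix of odd size has zero determinant, over any commutative ring. -/
lemma det_alt_odd {n : ℕ} (hn : Odd n) {R : Type*} [CommRing R]
    (A : Matrix (Fin n) (Fin n) R) (hskew : ∀ i j, A j i = - A i j)
    (hdiag : ∀ i, A i i = 0) : A.det = 0 := by
  set P := MvPolynomial (Fin n × Fin n) ℤ with hP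
  set M : Matrix (Fin n) (Fin n) P :=
    Matrix.of (fun i j => if i < j then X (i, j) else if j < i then -X (j, i) else 0) with hM
  have hMT : Mᵀ = -M := by
    refine Matrix.ext fun i j => ?_
    rw [Matrix.transpose_apply, Matrix.neg_apply]
    show (if j < i then X (j, i) else if i < j then -X (i, j) else 0)
        = -(if i < j then X (i, j) else if j < i then -X (j, i) else (0 : P))
    rcases lt_trichotomy i j with h | h | h
    · rw [if_neg (asymm h), if_pos h, if_pos h]
    · subst h; simp
    · rw [if_pos h, if_neg (asymm h), if_pos h, neg_neg]
  have hdet : M.det = 0 := by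
    have h1 : M.det = -M.det := by
      conv_lhs => rw [← Matrix.det_transpose, hMT]
      rw [Matrix.det_neg, Fintype.card_fin, hn.neg_one_pow, neg_one_mul]
    have h2 : (2 : P) * M.det = 0 := by linear_combination h1
    rcases mul_eq_zero.mp h2 with h | h
    · exact absurd h two_ne_zero
    · exact h
  let f : P →+* R := eval₂Hom (Int.castRingHom R) (fun p => A p.1 p.2)
  have hmap : M.map f = A := by
    refine Matrix.ext fun i j => ?_
    rcases lt_trichotomy i j with h | h | h
    · have hMij : M i j = X (i, j) := by
        show (if i < j then X (i, j) else if j < i then -X (j, i) else 0) = X (i, j)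
        rw [if_pos h]
      rw [Matrix.map_apply, hMij]
      exact eval₂Hom_X' _ _ _
    · subst h
      have hMij : M i i = 0 := by
        show (if i < i then X (i, i) else if i < i then -X (i, i) else 0) = 0
        rw [if_neg (lt_irrefl i), if_neg (lt_irrefl i)]
      rw [Matrix.map_apply, hMij, map_zero, hdiag]
    · have : M i j = -X (j, i) := by
        show (if i < j then X (i, j) else if j < i then -X (j, i) else 0) = -X (j, i)
        rw [if_neg (asymm h), if_pos h]
      rw [Matrix.map_apply, this, map_neg, eval₂Hom_X', hskew i j, neg_neg]
  calc A.det = (M.map f).det := by rw [hmap]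
    _ = f M.det := (RingHom.map_det f M).symm
    _ = 0 := by rw [hdet, map_zero]

section upd
variable {V : Type*}

lemma upd0 (x y z w : V) : Function.update (![x, y, z] : Fin 3 → V) 0 w = ![w, y, z] := by
  funext i; fin_cases i <;> simp
lemma upd1 (x y z w : V) : Function.update (![x, y, z] : Fin 3 → V) 1 w = ![x, w, z] := by
  funext i; fin_cases i <;> simp
lemma upd2 (x y z w : V) : Function.update (![x, y, z] : Fin 3 → V) 2 w = ![x, y, w] := by
  funext i; fin_cases i <;> simp

end upd

section slots
variable {K V : Type*} [Field K] [AddCommGroup V] [Module K V]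
  (ω : AlternatingMap K V K (Fin 3))

lemma slot0_add (x x' y z : V) : ω ![x + x', y, z] = ω ![x, y, z] + ω ![x', y, z] := by
  have := ω.map_update_add ![x, y, z] 0 x x'
  rwa [upd0, upd0, upd0] at this

lemma slot0_smul (a : K) (x y z : V) : ω ![a • x, y, z] = a * ω ![x, y, z] := by
  have := ω.map_update_smul ![x, y, z] 0 a x
  rwa [upd0, upd0, smul_eq_mul] at this

lemma slot1_add (x y y' z : V) : ω ![x, y + y', z] = ω ![x, y, z] + ω ![x, y', z] := by
  have := ω.map_update_add ![x, y, z] 1 y y'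
  rwa [upd1, upd1, upd1] at this

lemma slot1_smul (a : K) (x y z : V) : ω ![x, a • y, z] = a * ω ![x, y, z] := by
  have := ω.map_update_smul ![x, y, z] 1 a y
  rwa [upd1, upd1, smul_eq_mul] at this

lemma slot2_add (x y z z' : V) : ω ![x, y, z + z'] = ω ![x, y, z] + ω ![x, y, z'] := by
  have := ω.map_update_add ![x, y, z] 2 z z'
  rwa [upd2, upd2, upd2] at this

lemma slot2_smul (a : K) (x y z : V) : ω ![x, y, a • z] = a * ω ![x, y, z] := by
  have := ω.map_update_smul ![x, y, z] 2 a z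
  rwa [upd2, upd2, smul_eq_mul] at this

lemma swap01 (x y z : V) : ω ![y, x, z] = -ω ![x, y, z] := by
  have h := ω.map_swap ![x, y, z] (by decide : (0 : Fin 3) ≠ 1)
  have he : (![x, y, z] ∘ Equiv.swap (0 : Fin 3) 1) = ![y, x, z] := by
    funext i; fin_cases i <;> simp [Equiv.swap_apply_def]
  rwa [he] at h

lemma diag01 (x z : V) : ω ![x, x, z] = 0 :=
  ω.map_eq_zero_of_eq ![x, x, z] (i := 0) (j := 1) rfl (by decide)

lemma diag02 (x y : V) : ω ![x, y, x] = 0 :=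
  ω.map_eq_zero_of_eq ![x, y, x] (i := 0) (j := 2) rfl (by decide)

end slots

/-- Over any field, for an alternating trilinear form on a vector
space of even dimension (at least 2), every one-dimensional subspace (i.e. every
nonzero vector) is contained in a two-dimensional singular subspace. -/
theorem stmt0 {K V : Type*} [Field K] [AddCommGroup V] [Module K V]
    [FiniteDimensional K V] (heven : Even (Module.finrank K V))
    (hdim : 2 ≤ Module.finrank K V)
    (ω : AlternatingMap K V K (Fin 3)) (u : V) (hu : u ≠ 0) :
    ∃ U : Submodule K V, Module.finrank K U = 2 ∧ u ∈ U ∧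
      ∀ x ∈ U, ∀ y ∈ U, ∀ v : V, ω ![x, y, v] = 0 := by
  classical
  set n := Module.finrank K V with hn
  -- complement of span u
  obtain ⟨C, hC⟩ := Submodule.exists_isCompl (K ∙ u)
  have hCrank : finrank K C = n - 1 := by
    have h := Submodule.finrank_add_eq_of_isCompl hC
    rw [finrank_span_singleton hu] at h
    omega
  have hodd : Odd (n - 1) := by
    rcases heven with ⟨k, hk⟩
    refine ⟨k - 1, by omega⟩
  set m := n - 1 with hm
  let bC : Basis (Fin m) K C := finBasisOfFinrankEq K C hCrank
  let A : Matrix (Fin m) (Fin m) K := Matrix.of fun i j => ω ![u, (bC i : V), (bC j : V)]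
  have hAskew : ∀ i j, A j i = -A i j := by
    intro i j
    show ω ![u, (bC j : V), (bC i : V)] = -ω ![u, (bC i : V), (bC j : V)]
    have h := ω.map_swap ![u, (bC i : V), (bC j : V)] (by decide : (1 : Fin 3) ≠ 2)
    have he : (![u, (bC i : V), (bC j : V)] ∘ Equiv.swap (1 : Fin 3) 2)
        = ![u, (bC j : V), (bC i : V)] := by
      funext k; fin_cases k <;> simp [Equiv.swap_apply_def]
    rwa [he] at h
  have hAdiag : ∀ i, A i i = 0 := fun i =>
    ω.map_eq_zero_of_eq ![u, (bC i : V), (bC i : V)] (i := 1) (j := 2) rfl (by decide)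
  have hAdet : A.det = 0 := det_alt_odd hodd A hAskew hAdiag
  obtain ⟨c, hc0, hcA⟩ := (Matrix.exists_vecMul_eq_zero_iff).mpr hAdet
  -- the null vector
  set z : C := ∑ i, c i • bC i with hz
  have hzne : z ≠ 0 := by
    intro h
    apply hc0
    have hli := Fintype.linearIndependent_iff.mp bC.linearIndependent
    funext i
    exact hli c h i
  set w : V := (z : V) with hwz
  have hwC : w ∈ C := z.2
  have hwne : w ≠ 0 := fun h => hzne (Subtype.ext h)
  -- key: ω (u, w, ⬝) = 0
  have hkey : ∀ v : V, ω ![u, w, v] = 0 := by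
    have hwsum : w = ∑ i, c i • (bC i : V) := by
      rw [hwz, hz]
      push_cast [Submodule.coe_sum]
      rfl
    have hbase : ∀ j, ω ![u, w, (bC j : V)] = 0 := by
      intro j
      rw [hwsum]
      have hexp : ω ![u, ∑ i, c i • (bC i : V), (bC j : V)]
          = ∑ i, c i * ω ![u, (bC i : V), (bC j : V)] := by
        induction (Finset.univ : Finset (Fin m)) using Finset.induction_on with
        | empty =>
          simp only [Finset.sum_empty]
          have := ω.map_update_zero ![u, 0, (bC j : V)] 1
          rw [upd1] at this
          exact this
        | @insert _ _ hnotmem ih =>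
          rw [Finset.sum_insert hnotmem, Finset.sum_insert hnotmem, slot1_add, ih,
            slot1_smul]
      rw [hexp]
      have : ∀ i, c i * ω ![u, (bC i : V), (bC j : V)] = c i * A i j := fun i => rfl
      simp only [this]
      have := congrFun hcA j
      simpa [Matrix.vecMul, dotProduct] using this
    -- linear map from C vanishing on the basis
    have hC0 : ∀ x ∈ C, ω ![u, w, x] = 0 := by
      intro x hx
      have hxsum : x = ∑ i, bC.repr ⟨x, hx⟩ i • (bC i : V) := by
        have := bC.sum_repr ⟨x, hx⟩
        calc x = ((⟨x, hx⟩ : C) : V) := rfl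
          _ = ((∑ i, bC.repr ⟨x, hx⟩ i • bC i : C) : V) := by rw [this]
          _ = ∑ i, bC.repr ⟨x, hx⟩ i • (bC i : V) := by
              push_cast [Submodule.coe_sum]; rfl
      rw [hxsum]
      have hexp : ω ![u, w, ∑ i, bC.repr ⟨x, hx⟩ i • (bC i : V)]
          = ∑ i, bC.repr ⟨x, hx⟩ i * ω ![u, w, (bC i : V)] := by
        induction (Finset.univ : Finset (Fin m)) using Finset.induction_on with
        | empty =>
          simp only [Finset.sum_empty]
          have := ω.map_update_zero ![u, w, 0] 2
          rw [upd2] at this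
          exact this
        | @insert _ _ hnotmem ih =>
          rw [Finset.sum_insert hnotmem, Finset.sum_insert hnotmem, slot2_add, ih,
            slot2_smul]
      rw [hexp]
      apply Finset.sum_eq_zero
      intro i _
      rw [hbase i, mul_zero]
    intro v
    have hv : v ∈ (K ∙ u) ⊔ C := by rw [hC.sup_eq_top]; trivial
    obtain ⟨p, hp, q, hq, rfl⟩ := Submodule.mem_sup.mp hv
    obtain ⟨a, rfl⟩ := Submodule.mem_span_singleton.mp hp
    rw [slot2_add, hC0 q hq, slot2_smul, diag02, mul_zero, zero_add]
  -- build U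
  refine ⟨Submodule.span K {u, w}, ?_, ?_, ?_⟩
  · -- finrank = 2
    have hli : LinearIndependent K ![u, w] := by
      rw [LinearIndependent.pair_iff]
      intro s t hst
      have ht : t = 0 := by
        by_contra ht
        have h1 : t • w = -(s • u) := by
          rw [eq_neg_iff_add_eq_zero, add_comm]; exact hst
        have hw : w = t⁻¹ • (-(s • u)) := by
          rw [← h1, smul_smul, inv_mul_cancel₀ ht, one_smul]
        have hwmem : w ∈ K ∙ u := by
          rw [hw, smul_neg, smul_smul]
          exact Submodule.neg_mem _
            (Submodule.smul_mem _ _ (Submodule.mem_span_singleton_self u))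
        have hbot : w ∈ (K ∙ u) ⊓ C := ⟨hwmem, hwC⟩
        rw [hC.inf_eq_bot] at hbot
        exact hwne hbot
      subst ht
      simp only [zero_smul, add_zero] at hst
      rcases smul_eq_zero.mp hst with h | h
      · exact ⟨h, rfl⟩
      · exact absurd h hu
    have := finrank_span_eq_card (R := K) hli
    have hrange : Set.range ![u, w] = {u, w} := by
      simp [Matrix.range_cons, Matrix.range_empty, Set.singleton_union, Set.pair_comm]
    rw [hrange] at this
    rw [this]
    simp
  · exact Submodule.subset_span (by simp)
  · intro x hx y hy v
    obtain ⟨a, b, hab⟩ := Submodule.mem_span_pair.mp hx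
    obtain ⟨a', b', hab'⟩ := Submodule.mem_span_pair.mp hy
    rw [← hab, ← hab']
    rw [slot0_add, slot0_smul, slot0_smul, slot1_add, slot1_add, slot1_smul, slot1_smul,
      slot1_smul, slot1_smul, diag01, diag01, hkey, swap01, hkey]
    ring
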